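/- Fix τ ∈ ℕ. There is a constant C_τ such that for every α ∈ [0,1) and every n ∈ ℕ there exists an element w_n = Σ_{f ∈ P_τ*} c_f √f with integer coefficients satisfying |c_f| ≤ n, such that 0 ≤ α − {w_n} ≤ C_τ · n^{-(2^τ − 1)}, where {x} denotes the fractional part of x. -/

import Mathlib

/-- The `i`-th prime (0-indexed: `nthPrime 0 = 2`). -/
noncomputable def nthPrime (i : ℕ) : ℕ := Nat.nth Nat.Prime i

/-- The squarefree divisor of `p_1 ⋯ p_τ` indexed by `s ∈ {0,1}^τ`. -/
noncomputable def sqfDiv (τ : ℕ) (s : Fin τ → Bool) : ℕ :=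
  ∏ j, if s j then nthPrime j else 1

lemma nthPrime_prime (i : ℕ) : (nthPrime i).Prime := Nat.prime_nth_prime i

lemma nthPrime_pos (i : ℕ) : 0 < nthPrime i := (nthPrime_prime i).pos

lemma nthPrime_injOn : ∀ i j, nthPrime i = nthPrime j → i = j := by
  intro i j h
  exact (Nat.nth_injective Nat.infinite_setOf_prime) h

lemma sqfDiv_pos (τ : ℕ) (s : Fin τ → Bool) : 0 < sqfDiv τ s :=
  Finset.prod_pos (fun j _ => by by_cases h : s j <;> simp [h, nthPrime_pos])

/-- real square root of sqfDiv -/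
noncomputable def rS (τ : ℕ) (s : Fin τ → Bool) : ℝ := Real.sqrt (sqfDiv τ s)

lemma rS_pos (τ : ℕ) (s : Fin τ → Bool) : 0 < rS τ s :=
  Real.sqrt_pos.2 (by exact_mod_cast sqfDiv_pos τ s)

lemma sqfDiv_false (τ : ℕ) : sqfDiv τ (fun _ => false) = 1 := by
  simp [sqfDiv]

lemma rS_false (τ : ℕ) : rS τ (fun _ => false) = 1 := by
  simp [rS, sqfDiv_false]

lemma sqfDiv_snoc (τ : ℕ) (t : Fin τ → Bool) (b : Bool) :
    sqfDiv (τ+1) (Fin.snoc t b) = sqfDiv τ t * (if b then nthPrime τ else 1) := by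
  rw [sqfDiv, Fin.prod_univ_castSucc]
  simp [sqfDiv, Fin.snoc_castSucc, Fin.snoc_last]

lemma rS_snoc (τ : ℕ) (t : Fin τ → Bool) (b : Bool) :
    rS (τ+1) (Fin.snoc t b) = rS τ t * (if b then Real.sqrt (nthPrime τ) else 1) := by
  rw [rS, sqfDiv_snoc, Nat.cast_mul, Real.sqrt_mul (by positivity)]
  cases b <;> simp [rS]


def FF : ℕ → Set ℝ
  | 0 => Set.range (fun q : ℚ => (q:ℝ))
  | (k+1) => {x | ∃ a ∈ FF k, ∃ b ∈ FF k, x = a + b * Real.sqrt (nthPrime k)}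

lemma sq_sqrtp (k : ℕ) : Real.sqrt (nthPrime k) ^ 2 = (nthPrime k : ℝ) :=
  Real.sq_sqrt (by positivity)

lemma FF_ratCast (k : ℕ) : ∀ q : ℚ, (q:ℝ) ∈ FF k := by
  induction k with
  | zero => exact fun q => ⟨q, rfl⟩
  | succ k ih => exact fun q => ⟨q, ih q, 0, by simpa using ih 0, by simp⟩

lemma FF_zero (k : ℕ) : (0:ℝ) ∈ FF k := by simpa using FF_ratCast k 0
lemma FF_one (k : ℕ) : (1:ℝ) ∈ FF k := by simpa using FF_ratCast k 1
lemma FF_natCast (k : ℕ) (n : ℕ) : (n:ℝ) ∈ FF k := by simpa using FF_ratCast k n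

lemma FF_add (k : ℕ) : ∀ {x y : ℝ}, x ∈ FF k → y ∈ FF k → x + y ∈ FF k := by
  induction k with
  | zero =>
    rintro x y ⟨a, rfl⟩ ⟨b, rfl⟩; exact ⟨a + b, by push_cast; ring⟩
  | succ k ih =>
    rintro x y ⟨a, ha, b, hb, rfl⟩ ⟨c, hc, d, hd, rfl⟩
    exact ⟨a + c, ih ha hc, b + d, ih hb hd, by ring⟩

lemma FF_neg (k : ℕ) : ∀ {x : ℝ}, x ∈ FF k → -x ∈ FF k := by
  induction k with
  | zero => rintro x ⟨a, rfl⟩; exact ⟨-a, by push_cast; ring⟩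
  | succ k ih =>
    rintro x ⟨a, ha, b, hb, rfl⟩
    exact ⟨-a, ih ha, -b, ih hb, by ring⟩

lemma FF_mul (k : ℕ) : ∀ {x y : ℝ}, x ∈ FF k → y ∈ FF k → x * y ∈ FF k := by
  induction k with
  | zero => rintro x y ⟨a, rfl⟩ ⟨b, rfl⟩; exact ⟨a * b, by push_cast; ring⟩
  | succ k ih =>
    rintro x y ⟨a, ha, b, hb, rfl⟩ ⟨c, hc, d, hd, rfl⟩
    refine ⟨a * c + b * d * (nthPrime k), ?_, a * d + b * c, ?_, ?_⟩
    · exact FF_add k (ih ha hc) (ih (ih hb hd) (FF_natCast k _))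
    · exact FF_add k (ih ha hd) (ih hb hc)
    · linear_combination (b * d) * sq_sqrtp k

lemma FF_sub (k : ℕ) {x y : ℝ} (hx : x ∈ FF k) (hy : y ∈ FF k) : x - y ∈ FF k := by
  simpa [sub_eq_add_neg] using FF_add k hx (FF_neg k hy)

lemma FF_mono (k : ℕ) {x : ℝ} (hx : x ∈ FF k) : x ∈ FF (k+1) :=
  ⟨x, hx, 0, FF_zero k, by simp⟩

lemma FF_sqrtp {j k : ℕ} (h : j < k) : Real.sqrt (nthPrime j) ∈ FF k := by
  induction k with
  | zero => omega
  | succ k ih =>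
    rcases Nat.lt_succ_iff_lt_or_eq.1 h with h' | h'
    · exact FF_mono k (ih h')
    · exact ⟨0, FF_zero k, 1, FF_one k, by simp [h']⟩

lemma FF_inv_and_Q (k : ℕ) :
    (∀ x ∈ FF k, x⁻¹ ∈ FF k) ∧
    (∀ m : ℕ, Squarefree m → ∀ q : ℕ, q.Prime → q ∣ m →
      (∀ j, j < k → q ≠ nthPrime j) → Real.sqrt m ∉ FF k) := by
  induction k with
  | zero =>
    constructor
    · rintro x ⟨a, rfl⟩; exact ⟨a⁻¹, by push_cast; rfl⟩
    · rintro m hm q hq hqm - ⟨a, heq⟩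
      have hsqm : ¬ IsSquare m := by
        rintro ⟨t, rfl⟩
        exact hq.not_isUnit (hm q ((mul_dvd_mul (hq.dvd_of_dvd_pow (n := 2) (by
          rwa [pow_two])) (hq.dvd_of_dvd_pow (n := 2) (by rwa [pow_two])))))
      exact (irrational_sqrt_natCast_iff.mpr hsqm) ⟨a, heq⟩
  | succ k ih =>
    obtain ⟨ihInv, ihQ⟩ := ih
    set p : ℕ := nthPrime k with hp_def
    have hp : p.Prime := nthPrime_prime k
    have havoidp : ∀ j, j < k → p ≠ nthPrime j := by
      intro j hj hne; exact absurd (nthPrime_injOn k j hne) (by omega)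
    have hpQ : Real.sqrt p ∉ FF k := ihQ p hp.prime.squarefree p hp dvd_rfl havoidp
    have hInvStep : ∀ x ∈ FF (k+1), x⁻¹ ∈ FF (k+1) := by
      rintro x ⟨a, ha, b, hb, rfl⟩
      by_cases hx : a + b * Real.sqrt p = 0
      · rw [hx, inv_zero]; exact FF_mono k (FF_zero k)
      have hconj : a - b * Real.sqrt p ≠ 0 := by
        intro h0
        by_cases hb0 : b = 0
        · exact hx (by rw [hb0] at h0 ⊢; simpa using h0)
        · refine hpQ ?_
          have : Real.sqrt p = a * b⁻¹ := by
            field_simp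
            linarith [h0]
          rw [this]; exact FF_mul k ha (ihInv b hb)
      set d : ℝ := a * a - b * b * (p:ℝ) with hd_def
      have hdmem : d ∈ FF k :=
        FF_sub k (FF_mul k ha ha) (FF_mul k (FF_mul k hb hb) (FF_natCast k p))
      have hd : d ≠ 0 := by
        have hfact : d = (a + b * Real.sqrt p) * (a - b * Real.sqrt p) := by
          linear_combination (b * b) * sq_sqrtp k
        rw [hfact]; exact mul_ne_zero hx hconj
      have hinv_eq : (a + b * Real.sqrt p)⁻¹ = a * d⁻¹ + (-b * d⁻¹) * Real.sqrt p := by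
        refine inv_eq_of_mul_eq_one_right ?_
        have key : (a + b * Real.sqrt p) * (a * d⁻¹ + (-b * d⁻¹) * Real.sqrt p)
            = d * d⁻¹ := by
          linear_combination (-(b * b * d⁻¹)) * sq_sqrtp k
        rw [key, mul_inv_cancel₀ hd]
      rw [hinv_eq]
      exact ⟨a * d⁻¹, FF_mul k ha (ihInv d hdmem),
        -b * d⁻¹, FF_mul k (FF_neg k hb) (ihInv d hdmem), rfl⟩
    refine ⟨hInvStep, ?_⟩
    rintro m hm q hq hqm havoid ⟨a, ha, b, hb, heq⟩
    have havoid' : ∀ j, j < k → q ≠ nthPrime j := fun j hj => havoid j (by omega)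
    have hqp : q ≠ p := havoid k (by omega)
    have h1 : Real.sqrt m ^ 2 = (m:ℝ) := Real.sq_sqrt (by positivity)
    rw [heq] at h1
    have h2 : (m:ℝ) = a * a + b * b * (p:ℝ) + 2 * a * b * Real.sqrt p := by
      linear_combination (-1 : ℝ) * h1 + (b * b) * sq_sqrtp k
    by_cases hb0 : b = 0
    · refine ihQ m hm q hq hqm havoid' ?_
      rw [heq, hb0]; simpa using ha
    by_cases ha0 : a = 0
    · have hmp : Real.sqrt ((m : ℝ) * p) = b * p := by
        rw [Real.sqrt_mul (by positivity), heq, ha0]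
        linear_combination b * sq_sqrtp k
      by_cases hpm : p ∣ m
      · obtain ⟨m', rfl⟩ := hpm
        have hm' : Squarefree m' := hm.squarefree_of_dvd (Dvd.intro_left p rfl)
        have hqm' : q ∣ m' := (Nat.Coprime.dvd_of_dvd_mul_left
          ((Nat.coprime_primes hq hp).mpr hqp) hqm)
        refine ihQ m' hm' q hq hqm' havoid' ?_
        have hps : (0:ℝ) < p := by exact_mod_cast hp.pos
        have : Real.sqrt ((m' : ℝ)) * p = b * p := by
          rw [← hmp]
          rw [show ((p * m' : ℕ) : ℝ) * p = (p:ℝ)^2 * m' by push_cast; ring]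
          rw [Real.sqrt_mul (by positivity), Real.sqrt_sq (le_of_lt hps)]
          ring
        have hb' : Real.sqrt (m' : ℝ) = b := mul_right_cancel₀ (ne_of_gt hps) this
        rw [hb']; exact hb
      · have hmmp : Squarefree (m * p) :=
          Nat.squarefree_mul_iff.mpr
            ⟨((Nat.Prime.coprime_iff_not_dvd hp).mpr hpm).symm, hm, hp.squarefree⟩
        refine ihQ (m * p) hmmp q hq (hqm.mul_right p) havoid' ?_
        rw [Nat.cast_mul, hmp]
        exact FF_mul k hb (FF_natCast k p)
    · have hab : (2 : ℝ) * a * b ≠ 0 := by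
        simp only [mul_ne_zero_iff]
        exact ⟨⟨two_ne_zero, ha0⟩, hb0⟩
      refine hpQ ?_
      have h3 : Real.sqrt p = ((m:ℝ) - a * a - b * b * p) * (2 * a * b)⁻¹ := by
        rw [eq_mul_inv_iff_mul_eq₀ hab]
        linear_combination (-1 : ℝ) * h2
      rw [h3]
      exact FF_mul k
        (FF_sub k (FF_sub k (FF_natCast k m) (FF_mul k ha ha))
          (FF_mul k (FF_mul k hb hb) (FF_natCast k p)))
        (ihInv _ (FF_mul k (FF_mul k (by simpa using FF_ratCast k 2) ha) hb))

lemma rS_mem_FF (τ : ℕ) (s : Fin τ → Bool) : rS τ s ∈ FF τ := by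
  induction τ with
  | zero =>
    have hs : s = fun _ => false := funext fun i => i.elim0
    rw [hs, rS_false]; exact FF_one 0
  | succ τ ih =>
    rw [← Fin.snoc_init_self s, rS_snoc]
    refine FF_mul (τ+1) (FF_mono τ (ih _)) ?_
    by_cases hb : s (Fin.last τ)
    · rw [if_pos hb]; exact FF_sqrtp (Nat.lt_succ_self τ)
    · rw [if_neg hb]; exact FF_one _

noncomputable def snocEquiv (τ : ℕ) : (Fin τ → Bool) × Bool ≃ (Fin (τ+1) → Bool) where
  toFun x := Fin.snoc x.1 x.2
  invFun s := (Fin.init s, s (Fin.last τ))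
  left_inv x := by simp [Fin.init_snoc, Fin.snoc_last]
  right_inv s := by simp [Fin.snoc_init_self]

theorem li (τ : ℕ) : ∀ q : (Fin τ → Bool) → ℚ, (∑ s, (q s : ℝ) * rS τ s) = 0 → q = 0 := by
  induction τ with
  | zero =>
    intro q h
    have hs : ∀ s : Fin 0 → Bool, s = (fun _ => false) := fun s => funext fun i => i.elim0
    rw [Fintype.sum_eq_single (fun _ => false) (fun x hx => absurd (hs x) hx)] at h
    rw [rS_false] at h
    funext s; rw [hs s]
    have : (q (fun _ => false) : ℝ) = 0 := by simpa using h
    exact_mod_cast this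
  | succ τ ih =>
    intro q h
    rw [← Equiv.sum_comp (snocEquiv τ), Fintype.sum_prod_type] at h
    simp only [snocEquiv, Equiv.coe_fn_mk, rS_snoc] at h
    set A := ∑ t : Fin τ → Bool, ((q (Fin.snoc t false) : ℝ) * rS τ t) with hA
    set B := ∑ t : Fin τ → Bool, ((q (Fin.snoc t true) : ℝ) * rS τ t) with hB
    have h' : A + B * Real.sqrt (nthPrime τ) = 0 := by
      rw [hA, hB, Finset.sum_mul, ← Finset.sum_add_distrib, ← h]
      refine Finset.sum_congr rfl fun t _ => ?_
      rw [Fintype.sum_bool]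
      simp only [if_pos, if_neg, Bool.false_eq_true, ↓reduceIte, mul_one]
      ring
    have memA : A ∈ FF τ := by
      refine Finset.sum_induction _ _ (fun a b ha hb => FF_add τ ha hb) (FF_zero τ) fun t _ => ?_
      exact FF_mul τ (FF_ratCast τ _) (rS_mem_FF τ t)
    have memB : B ∈ FF τ := by
      refine Finset.sum_induction _ _ (fun a b ha hb => FF_add τ ha hb) (FF_zero τ) fun t _ => ?_
      exact FF_mul τ (FF_ratCast τ _) (rS_mem_FF τ t)
    have hBzero : B = 0 := by
      by_contra hB0
      have hsqrt : Real.sqrt (nthPrime τ) = -A * B⁻¹ := by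
        field_simp
        linarith [h']
      have : Real.sqrt (nthPrime τ) ∈ FF τ := by
        rw [hsqrt]; exact FF_mul τ (FF_neg τ memA) ((FF_inv_and_Q τ).1 B memB)
      refine (FF_inv_and_Q τ).2 (nthPrime τ) (nthPrime_prime τ).prime.squarefree
        (nthPrime τ) (nthPrime_prime τ) dvd_rfl (fun j hj hne => ?_) this
      exact absurd (nthPrime_injOn τ j hne) (by omega)
    have hq1 : (fun t => q (Fin.snoc t true)) = 0 := by
      apply ih; rw [← hB, hBzero]
    have hAzero : A = 0 := by rw [hBzero] at h'; simpa using h'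
    have hq0 : (fun t => q (Fin.snoc t false)) = 0 := by
      apply ih; rw [← hA, hAzero]
    funext s
    rw [← Fin.snoc_init_self s]
    by_cases hb : s (Fin.last τ)
    · rw [hb]; exact congrFun hq1 (Fin.init s)
    · rw [Bool.not_eq_true] at hb; rw [hb]; exact congrFun hq0 (Fin.init s)

theorem li_int (τ : ℕ) (c : (Fin τ → Bool) → ℤ) (h : ∑ s, (c s : ℝ) * rS τ s = 0) :
    c = 0 := by
  have := li τ (fun s => (c s : ℚ)) (by push_cast; exact_mod_cast h)
  funext s
  have h2 : ((c s : ℚ)) = 0 := by simpa using congrFun this s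
  exact_mod_cast h2

/-! ### Multiplication structure on coefficient vectors -/

def bxor {τ : ℕ} (s u : Fin τ → Bool) : Fin τ → Bool := fun j => xor (s j) (u j)

lemma bxor_involutive {τ : ℕ} (s : Fin τ → Bool) : Function.Involutive (bxor s) := by
  intro u; funext j; simp [bxor]

noncomputable def wgt (τ : ℕ) (s t : Fin τ → Bool) : ℕ := ∏ j, if s j && t j then nthPrime j else 1

noncomputable def vmul (τ : ℕ) (c d : (Fin τ → Bool) → ℤ) : (Fin τ → Bool) → ℤ :=
  fun u => ∑ s, c s * d (bxor s u) * (wgt τ s (bxor s u) : ℤ)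

def sgn (τ : ℕ) (ε s : Fin τ → Bool) : ℤ := ∏ j, if ε j && s j then -1 else 1

noncomputable def valE (τ : ℕ) (ε : Fin τ → Bool) (c : (Fin τ → Bool) → ℤ) : ℝ :=
  ∑ s, ((sgn τ ε s * c s : ℤ) : ℝ) * rS τ s

lemma sgn_abs (τ : ℕ) (ε s : Fin τ → Bool) : |sgn τ ε s| = 1 := by
  rw [sgn, Finset.abs_prod]
  refine Finset.prod_eq_one fun j _ => ?_
  by_cases h : ε j && s j <;> simp [h]

lemma sgn_ne_zero (τ : ℕ) (ε s : Fin τ → Bool) : sgn τ ε s ≠ 0 := by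
  intro h; have := sgn_abs τ ε s; rw [h] at this; simp at this

lemma sgn_false (τ : ℕ) (s : Fin τ → Bool) : sgn τ (fun _ => false) s = 1 := by
  simp [sgn]

lemma sgn_mul (τ : ℕ) (ε s t : Fin τ → Bool) :
    sgn τ ε s * sgn τ ε t = sgn τ ε (bxor s t) := by
  rw [sgn, sgn, sgn, ← Finset.prod_mul_distrib]
  refine Finset.prod_congr rfl fun j _ => ?_
  cases he : ε j <;> cases hs : s j <;> cases ht : t j <;> simp [bxor, he, hs, ht]

lemma sqfDiv_mul (τ : ℕ) (s t : Fin τ → Bool) :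
    sqfDiv τ s * sqfDiv τ t = (wgt τ s t)^2 * sqfDiv τ (bxor s t) := by
  rw [sqfDiv, sqfDiv, sqfDiv, wgt, ← Finset.prod_mul_distrib, ← Finset.prod_pow,
    ← Finset.prod_mul_distrib]
  refine Finset.prod_congr rfl fun j _ => ?_
  cases hs : s j <;> cases ht : t j <;> simp [bxor, hs, ht] <;> ring

lemma rS_mul (τ : ℕ) (s t : Fin τ → Bool) :
    rS τ s * rS τ t = (wgt τ s t : ℝ) * rS τ (bxor s t) := by
  rw [rS, rS, rS, ← Real.sqrt_mul (by positivity), ← Nat.cast_mul, sqfDiv_mul]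
  push_cast
  rw [Real.sqrt_mul (sq_nonneg _), Real.sqrt_sq (by positivity)]

lemma valE_mul (τ : ℕ) (ε : Fin τ → Bool) (c d : (Fin τ → Bool) → ℤ) :
    valE τ ε (vmul τ c d) = valE τ ε c * valE τ ε d := by
  rw [valE, valE, valE, Finset.sum_mul_sum]
  rw [show ∑ u, ((sgn τ ε u * vmul τ c d u : ℤ) : ℝ) * rS τ u
      = ∑ u, ∑ s, ((sgn τ ε u * (c s * d (bxor s u) * (wgt τ s (bxor s u) : ℤ)) : ℤ) : ℝ) * rS τ u
      from Finset.sum_congr rfl fun u _ => by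
        rw [vmul, Finset.mul_sum, Int.cast_sum, Finset.sum_mul]]
  rw [Finset.sum_comm]
  refine Finset.sum_congr rfl fun s _ => ?_
  rw [← Equiv.sum_comp (Function.Involutive.toPerm _ (bxor_involutive s))]
  refine Finset.sum_congr rfl fun t _ => ?_
  have h2 : (Function.Involutive.toPerm _ (bxor_involutive s)) t = bxor s t := rfl
  rw [h2]
  have h1 : bxor s (bxor s t) = t := bxor_involutive s t
  rw [h1]
  have h3 : ((sgn τ ε s * c s : ℤ) : ℝ) * rS τ s * (((sgn τ ε t * d t : ℤ) : ℝ) * rS τ t)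
      = ((sgn τ ε s * sgn τ ε t : ℤ) : ℝ) * (c s : ℝ) * (d t : ℝ) * (rS τ s * rS τ t) := by
    push_cast; ring
  rw [h3, sgn_mul, rS_mul]
  push_cast; ring

lemma sgn_snoc (τ : ℕ) (ε' : Fin τ → Bool) (b : Bool) (t : Fin τ → Bool) (b' : Bool) :
    sgn (τ+1) (Fin.snoc ε' b) (Fin.snoc t b')
      = sgn τ ε' t * (if b && b' then -1 else 1) := by
  rw [sgn, Fin.prod_univ_castSucc, sgn]
  simp [Fin.snoc_castSucc, Fin.snoc_last]

lemma valE_snoc (τ : ℕ) (ε' : Fin τ → Bool) (b : Bool) (c : (Fin (τ+1) → Bool) → ℤ) :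
    valE (τ+1) (Fin.snoc ε' b) c
      = valE τ ε' (fun t => c (Fin.snoc t false))
        + (if b then (-1:ℝ) else 1) * valE τ ε' (fun t => c (Fin.snoc t true))
          * Real.sqrt (nthPrime τ) := by
  have key : ∀ t : Fin τ → Bool,
      (∑ b' : Bool, ((sgn (τ+1) (Fin.snoc ε' b) (Fin.snoc t b') * c (Fin.snoc t b') : ℤ):ℝ)
        * rS (τ+1) (Fin.snoc t b'))
      = ((sgn τ ε' t * c (Fin.snoc t false) : ℤ):ℝ) * rS τ t
        + (if b then (-1:ℝ) else 1) * (((sgn τ ε' t * c (Fin.snoc t true) : ℤ):ℝ) * rS τ t)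
          * Real.sqrt (nthPrime τ) := by
    intro t
    rw [Fintype.sum_bool, sgn_snoc, sgn_snoc, rS_snoc, rS_snoc]
    cases b <;> push_cast <;> simp <;> ring
  rw [valE, ← Equiv.sum_comp (snocEquiv τ), Fintype.sum_prod_type]
  simp only [snocEquiv, Equiv.coe_fn_mk]
  rw [Finset.sum_congr rfl (fun t _ => key t), Finset.sum_add_distrib]
  rw [valE, valE, Finset.mul_sum, Finset.sum_mul]

lemma valE_lin (τ : ℕ) (ε : Fin τ → Bool) (x y : (Fin τ → Bool) → ℤ) (k : ℤ) :
    valE τ ε (fun s => x s - k * y s) = valE τ ε x - (k:ℝ) * valE τ ε y := by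
  rw [valE, valE, valE, Finset.mul_sum, ← Finset.sum_sub_distrib]
  refine Finset.sum_congr rfl fun s _ => ?_
  push_cast; ring

theorem norm_int (τ : ℕ) : ∀ c : (Fin τ → Bool) → ℤ, ∃ m : ℤ, ∏ ε, valE τ ε c = (m:ℝ) := by
  induction τ with
  | zero =>
    intro c
    refine ⟨c (fun _ => false), ?_⟩
    have h0 : ∀ x : Fin 0 → Bool, x = (fun _ => false) := fun x => funext fun i => i.elim0
    rw [Fintype.prod_eq_single (fun _ => false) (fun x hx => absurd (h0 x) hx)]
    rw [valE, Fintype.sum_eq_single (fun _ => false) (fun x hx => absurd (h0 x) hx)]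
    rw [rS_false, sgn_false]
    push_cast; ring
  | succ τ ih =>
    intro c
    obtain ⟨m, hm⟩ := ih (fun s =>
      vmul τ (fun t => c (Fin.snoc t false)) (fun t => c (Fin.snoc t false)) s
      - (nthPrime τ : ℤ) * vmul τ (fun t => c (Fin.snoc t true)) (fun t => c (Fin.snoc t true)) s)
    refine ⟨m, ?_⟩
    rw [← Equiv.prod_comp (snocEquiv τ), Fintype.prod_prod_type]
    simp only [snocEquiv, Equiv.coe_fn_mk]
    rw [← hm]
    refine Finset.prod_congr rfl fun ε' _ => ?_
    rw [Fintype.prod_bool, valE_snoc, valE_snoc, valE_lin, valE_mul, valE_mul]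
    simp only [if_true, if_false, Bool.false_eq_true, ↓reduceIte]
    linear_combination -(valE τ ε' (fun t => c (Fin.snoc t true))
      * valE τ ε' (fun t => c (Fin.snoc t true))) * sq_sqrtp τ

/-- sum of all the square roots -/
noncomputable def Mc (τ : ℕ) : ℝ := ∑ s : Fin τ → Bool, rS τ s

lemma Mc_ge_one (τ : ℕ) : 1 ≤ Mc τ := by
  have h := Finset.single_le_sum (f := fun s => rS τ s)
    (fun s _ => (rS_pos τ s).le) (Finset.mem_univ (fun _ => false))
  rw [rS_false] at h
  exact h

lemma Mc_pos (τ : ℕ) : 0 < Mc τ := lt_of_lt_of_le one_pos (Mc_ge_one τ)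

lemma valE_false_eq (τ : ℕ) (c : (Fin τ → Bool) → ℤ) :
    valE τ (fun _ => false) c = ∑ s, (c s : ℝ) * rS τ s := by
  rw [valE]
  refine Finset.sum_congr rfl fun s _ => ?_
  rw [sgn_false]; push_cast; ring

lemma valE_ne_zero (τ : ℕ) (ε : Fin τ → Bool) (c : (Fin τ → Bool) → ℤ) (hc : c ≠ 0) :
    valE τ ε c ≠ 0 := by
  intro h
  apply hc
  have h2 := li_int τ (fun s => sgn τ ε s * c s) (by exact_mod_cast h)
  funext s
  have h3 := congrFun h2 s
  simp only [Pi.zero_apply] at h3 ⊢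
  rcases mul_eq_zero.mp h3 with h4 | h4
  · exact absurd h4 (sgn_ne_zero τ ε s)
  · exact h4

lemma valE_bound (τ : ℕ) (ε : Fin τ → Bool) (c : (Fin τ → Bool) → ℤ) (N : ℝ)
    (hbd : ∀ s, |(c s : ℝ)| ≤ N) : |valE τ ε c| ≤ N * Mc τ := by
  calc |valE τ ε c| ≤ ∑ s, |((sgn τ ε s * c s : ℤ) : ℝ) * rS τ s| :=
        Finset.abs_sum_le_sum_abs _ _
    _ ≤ ∑ s, N * rS τ s := by
        refine Finset.sum_le_sum fun s _ => ?_
        rw [abs_mul, abs_of_pos (rS_pos τ s)]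
        refine mul_le_mul_of_nonneg_right ?_ (rS_pos τ s).le
        rw [Int.cast_mul, abs_mul]
        have hsg : |((sgn τ ε s : ℤ) : ℝ)| = 1 := by
          rw [← Int.cast_abs, sgn_abs]; norm_num
        rw [hsg, one_mul]
        exact hbd s
    _ = N * Mc τ := by rw [← Finset.mul_sum]; rfl

theorem liouville (τ : ℕ) (c : (Fin τ → Bool) → ℤ) (hc : c ≠ 0) (N : ℝ)
    (hbd : ∀ s, |(c s : ℝ)| ≤ N) :
    (1:ℝ) ≤ |∑ s, (c s : ℝ) * rS τ s| * (N * Mc τ) ^ (2 ^ τ - 1) := by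
  obtain ⟨m, hm⟩ := norm_int τ c
  have hm0 : m ≠ 0 := by
    intro h
    rw [h] at hm
    exact (Finset.prod_ne_zero_iff.mpr (fun ε _ => valE_ne_zero τ ε c hc)) (by simpa using hm)
  have h1 : (1:ℝ) ≤ |∏ ε, valE τ ε c| := by
    rw [hm, ← Int.cast_abs]
    exact_mod_cast Int.one_le_abs hm0
  rw [Finset.abs_prod] at h1
  have hsplit : ∏ ε, |valE τ ε c|
      = |valE τ (fun _ => false) c| * ∏ ε ∈ Finset.univ.erase (fun _ => false), |valE τ ε c| :=
    (Finset.mul_prod_erase Finset.univ _ (Finset.mem_univ _)).symm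
  have hNM : (0:ℝ) ≤ N * Mc τ := by
    have := abs_nonneg (valE τ (fun _ => false) c)
    have hb := valE_bound τ (fun _ => false) c N hbd
    linarith
  have hbound : ∏ ε ∈ Finset.univ.erase (fun _ => false), |valE τ ε c|
      ≤ (N * Mc τ) ^ (2 ^ τ - 1) := by
    have hcard : (Finset.univ.erase (fun (_ : Fin τ) => false)).card = 2 ^ τ - 1 := by
      rw [Finset.card_erase_of_mem (Finset.mem_univ _), Finset.card_univ]
      simp
    calc ∏ ε ∈ Finset.univ.erase (fun _ => false), |valE τ ε c|
        ≤ ∏ _ε ∈ Finset.univ.erase (fun (_ : Fin τ) => false), (N * Mc τ) :=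
          Finset.prod_le_prod (fun ε _ => abs_nonneg _) (fun ε _ => valE_bound τ ε c N hbd)
      _ = (N * Mc τ) ^ (2 ^ τ - 1) := by rw [Finset.prod_const, hcard]
  calc (1:ℝ) ≤ ∏ ε, |valE τ ε c| := h1
    _ = |valE τ (fun _ => false) c| * ∏ ε ∈ Finset.univ.erase (fun _ => false), |valE τ ε c| :=
        hsplit
    _ ≤ |valE τ (fun _ => false) c| * (N * Mc τ) ^ (2 ^ τ - 1) :=
        mul_le_mul_of_nonneg_left hbound (abs_nonneg _)
    _ = |∑ s, (c s : ℝ) * rS τ s| * (N * Mc τ) ^ (2 ^ τ - 1) := by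
        rw [valE_false_eq]

/-- indicator vector of the all-`false` index -/
noncomputable def indE (τ : ℕ) : (Fin τ → Bool) → ℤ :=
  fun s => if s = (fun _ => false) then 1 else 0

lemma valP_indE (τ : ℕ) : ∑ s, ((indE τ s : ℝ)) * rS τ s = 1 := by
  rw [Fintype.sum_eq_single (fun _ => false)
    (fun x hx => by simp [indE, hx])]
  simp [indE, rS_false]

lemma fract_lower (τ : ℕ) (d : (Fin τ → Bool) → ℤ) (hd0 : d (fun _ => false) = 0)
    (R : ℝ) (hR : 1 ≤ R) (hbd : ∀ s, |(d s : ℝ)| ≤ R)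
    (hpos : 0 < Int.fract (∑ s, (d s : ℝ) * rS τ s)) :
    ((2 * Mc τ ^ 3 * R) ^ (2 ^ τ - 1))⁻¹ ≤ Int.fract (∑ s, (d s : ℝ) * rS τ s) := by
  set x := ∑ s, (d s : ℝ) * rS τ s with hx
  set d' : (Fin τ → Bool) → ℤ := fun s => d s - ⌊x⌋ * indE τ s with hd'
  have hMc := Mc_ge_one τ
  have hRM : 1 ≤ R * Mc τ := by nlinarith
  have hval : ∑ s, (d' s : ℝ) * rS τ s = Int.fract x := by
    calc ∑ s, (d' s : ℝ) * rS τ s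
        = ∑ s, ((d s : ℝ) * rS τ s - (⌊x⌋:ℝ) * ((indE τ s : ℝ) * rS τ s)) :=
          Finset.sum_congr rfl fun s _ => by rw [hd']; push_cast; ring
      _ = x - (⌊x⌋:ℝ) * ∑ s, ((indE τ s : ℝ) * rS τ s) := by
          rw [Finset.sum_sub_distrib, ← Finset.mul_sum, hx]
      _ = Int.fract x := by rw [valP_indE, mul_one, Int.fract]
  have hd'ne : d' ≠ 0 := by
    intro h
    rw [h] at hval
    simp only [Pi.zero_apply, Int.cast_zero, zero_mul, Finset.sum_const_zero] at hval
    rw [← hval] at hpos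
    exact lt_irrefl 0 hpos
  have hxbd : |x| ≤ R * Mc τ := by
    have := valE_bound τ (fun _ => false) d R hbd
    rwa [valE_false_eq] at this
  have hfloorbd : |(⌊x⌋ : ℝ)| ≤ R * Mc τ + 1 := by
    rw [abs_le]
    constructor
    · have h1 := Int.lt_floor_add_one x
      have h2 := neg_abs_le x
      linarith
    · have h1 := Int.floor_le x
      have h2 := le_abs_self x
      linarith
  have hkey : R * Mc τ + 1 ≤ 2 * Mc τ ^ 2 * R := by
    have h1 : (1:ℝ) * 1 ≤ (R * Mc τ) * (2 * Mc τ - 1) :=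
      mul_le_mul hRM (by linarith) (by norm_num) (by linarith)
    nlinarith [h1]
  have hbd' : ∀ s, |(d' s : ℝ)| ≤ 2 * Mc τ ^ 2 * R := by
    intro s
    by_cases hs : s = (fun _ => false)
    · have hds : d' s = -⌊x⌋ := by
        subst hs; simp [hd', indE, hd0]
      rw [hds]
      push_cast
      rw [abs_neg]
      linarith [hfloorbd]
    · have hds : d' s = d s := by rw [hd']; simp [indE, hs]
      rw [hds]
      have h2 : R ≤ 2 * Mc τ ^ 2 * R := by nlinarith
      linarith [hbd s]
  have hliou := liouville τ d' hd'ne (2 * Mc τ ^ 2 * R) hbd'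
  rw [hval, abs_of_nonneg (Int.fract_nonneg x)] at hliou
  have hP : (0:ℝ) < (2 * Mc τ ^ 3 * R) ^ (2 ^ τ - 1) := by positivity
  rw [inv_eq_one_div, div_le_iff₀ hP]
  calc (1:ℝ) ≤ Int.fract x * (2 * Mc τ ^ 2 * R * Mc τ) ^ (2 ^ τ - 1) := hliou
    _ = Int.fract x * (2 * Mc τ ^ 3 * R) ^ (2 ^ τ - 1) := by ring_nf

lemma sum_sub_vec (τ : ℕ) (a b : (Fin τ → Bool) → ℤ) :
    ∑ s, ((a s - b s : ℤ) : ℝ) * rS τ s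
      = (∑ s, (a s : ℝ) * rS τ s) - ∑ s, (b s : ℝ) * rS τ s := by
  rw [← Finset.sum_sub_distrib]
  exact Finset.sum_congr rfl fun s _ => by push_cast; ring

lemma fract_sub_eq (τ : ℕ) (a b : (Fin τ → Bool) → ℤ)
    (hlt : Int.fract (∑ s, (b s : ℝ) * rS τ s) < Int.fract (∑ s, (a s : ℝ) * rS τ s)) :
    Int.fract (∑ s, ((a s - b s : ℤ) : ℝ) * rS τ s)
      = Int.fract (∑ s, (a s : ℝ) * rS τ s) - Int.fract (∑ s, (b s : ℝ) * rS τ s) := by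
  set va := ∑ s, (a s : ℝ) * rS τ s
  set vb := ∑ s, (b s : ℝ) * rS τ s
  rw [sum_sub_vec]
  have h1 : va - vb = ((⌊va⌋ - ⌊vb⌋ : ℤ) : ℝ) + (Int.fract va - Int.fract vb) := by
    rw [Int.fract, Int.fract]; push_cast; ring
  rw [h1, Int.fract_intCast_add, Int.fract_eq_self.mpr
    ⟨by linarith [Int.fract_nonneg vb], by linarith [Int.fract_lt_one va, Int.fract_nonneg vb]⟩]

noncomputable def extg (τ N : ℕ)
    (g : {s : Fin τ → Bool // s ≠ fun _ => false} → Fin (N+1)) : (Fin τ → Bool) → ℤ :=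
  fun s => if h : s = (fun _ => false) then 0 else ((g ⟨s, h⟩ : ℕ) : ℤ)

lemma extg_zero (τ N : ℕ) (g) : extg τ N g (fun _ => false) = 0 := by
  rw [extg, dif_pos rfl]

lemma extg_bd (τ N : ℕ) (g) (s : Fin τ → Bool) :
    0 ≤ extg τ N g s ∧ extg τ N g s ≤ (N : ℤ) := by
  rw [extg]
  by_cases h : s = (fun _ => false)
  · rw [dif_pos h]; omega
  · rw [dif_neg h]
    have := (g ⟨s, h⟩).is_le
    omega

lemma pigeon (τ N : ℕ) (hτ : 1 ≤ τ) (hN : 1 ≤ N) :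
    ∃ d : (Fin τ → Bool) → ℤ, d (fun _ => false) = 0 ∧ (∀ s, |d s| ≤ (N:ℤ)) ∧
      0 < Int.fract (∑ s, (d s : ℝ) * rS τ s) ∧
      Int.fract (∑ s, (d s : ℝ) * rS τ s) ≤ ((N:ℝ) ^ (2 ^ τ - 1))⁻¹ := by
  set D := 2 ^ τ - 1 with hD_def
  have h2τ : 2 ≤ 2 ^ τ := by
    calc 2 = 2 ^ 1 := by norm_num
    _ ≤ 2 ^ τ := Nat.pow_le_pow_right (by norm_num) hτ
  have hD : 1 ≤ D := by omega
  set K := (N+1) ^ D - 1 with hK_def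
  have hND : N ^ D < (N+1) ^ D := Nat.pow_lt_pow_left (by omega) (by omega)
  have hNDpos : 1 ≤ N ^ D := Nat.one_le_pow _ _ (by omega)
  have hK1 : 1 ≤ K := by omega
  have hNK : N ^ D ≤ K := by omega
  -- the index type
  have hcardT : Fintype.card {s : Fin τ → Bool // s ≠ fun _ => false} = D := by
    rw [hD_def]
    rw [Fintype.card_subtype_compl, Fintype.card_subtype_eq]
    congr 1
    simp [Fintype.card_fun]
  have hcardF : Fintype.card ({s : Fin τ → Bool // s ≠ fun _ => false} → Fin (N+1))
      = (N+1) ^ D := by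
    rw [Fintype.card_fun, Fintype.card_fin, hcardT]
  -- the pigeonhole map
  set Φ : ({s : Fin τ → Bool // s ≠ fun _ => false} → Fin (N+1)) → ℝ :=
    fun g => Int.fract (∑ s, (extg τ N g s : ℝ) * rS τ s) with hΦ_def
  have hΦ01 : ∀ g, 0 ≤ Φ g ∧ Φ g < 1 := fun g => ⟨Int.fract_nonneg _, Int.fract_lt_one _⟩
  have hmaps : ∀ g ∈ (Finset.univ : Finset _), (⌊Φ g * K⌋).toNat ∈ Finset.range K := by
    intro g _
    rw [Finset.mem_range]
    have h1 : ⌊Φ g * K⌋ < (K : ℤ) := Int.floor_lt.mpr (by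
      have h2 := (hΦ01 g).2
      have hKpos : (0:ℝ) < (K:ℝ) := by exact_mod_cast hK1
      have h3 := mul_lt_mul_of_pos_right h2 hKpos
      push_cast
      linarith)
    omega
  have hcard : (Finset.range K).card < (Finset.univ :
      Finset ({s : Fin τ → Bool // s ≠ fun _ => false} → Fin (N+1))).card := by
    rw [Finset.card_range, Finset.card_univ, hcardF]
    omega
  obtain ⟨g, -, g', -, hne, heq⟩ :=
    Finset.exists_ne_map_eq_of_card_lt_of_maps_to hcard hmaps
  have hfl : ∀ g, 0 ≤ ⌊Φ g * K⌋ := fun g => Int.floor_nonneg.mpr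
    (mul_nonneg (hΦ01 g).1 (by positivity))
  have hfloor : ⌊Φ g * K⌋ = ⌊Φ g' * K⌋ := by
    rw [← Int.toNat_of_nonneg (hfl g), ← Int.toNat_of_nonneg (hfl g'), heq]
  have habs : |Φ g * K - Φ g' * K| < 1 := Int.abs_sub_lt_one_of_floor_eq_floor hfloor
  -- the two fractional parts are distinct
  have hΦne : Φ g ≠ Φ g' := by
    intro h
    apply hne
    set z : ℤ := ⌊∑ s, (extg τ N g s : ℝ) * rS τ s⌋ - ⌊∑ s, (extg τ N g' s : ℝ) * rS τ s⌋
      with hz_def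
    set e : (Fin τ → Bool) → ℤ := fun s => extg τ N g s - extg τ N g' s - z * indE τ s with he
    have hvale : ∑ s, (e s : ℝ) * rS τ s = 0 := by
      calc ∑ s, (e s : ℝ) * rS τ s
          = ∑ s, (((extg τ N g s : ℝ) * rS τ s - (extg τ N g' s : ℝ) * rS τ s)
              - (z:ℝ) * ((indE τ s : ℝ) * rS τ s)) :=
            Finset.sum_congr rfl fun s _ => by rw [he]; push_cast; ring
        _ = (∑ s, (extg τ N g s : ℝ) * rS τ s) - (∑ s, (extg τ N g' s : ℝ) * rS τ s)
              - (z:ℝ) * ∑ s, ((indE τ s : ℝ) * rS τ s) := by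
            rw [Finset.sum_sub_distrib, Finset.sum_sub_distrib, ← Finset.mul_sum]
        _ = 0 := by
            rw [valP_indE, mul_one]
            have hg := Int.fract_add_floor (∑ s, (extg τ N g s : ℝ) * rS τ s)
            have hg' := Int.fract_add_floor (∑ s, (extg τ N g' s : ℝ) * rS τ s)
            have hΦg : Int.fract (∑ s, (extg τ N g s : ℝ) * rS τ s)
                = Int.fract (∑ s, (extg τ N g' s : ℝ) * rS τ s) := h
            rw [hz_def]
            push_cast
            linarith
    have he0 := li_int τ e hvale
    funext t
    have h1 := congrFun he0 t.val
    rw [he] at h1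
    simp only [Pi.zero_apply, indE] at h1
    rw [if_neg t.prop] at h1
    have h2 : extg τ N g t.val = extg τ N g' t.val := by omega
    rw [extg, extg, dif_neg t.prop, dif_neg t.prop] at h2
    have h3 : (g ⟨t.val, t.prop⟩ : ℕ) = (g' ⟨t.val, t.prop⟩ : ℕ) := by exact_mod_cast h2
    exact Fin.ext h3
  -- reduce to the case Φ g' < Φ g
  have key : ∀ g1 g2, Φ g2 < Φ g1 → |Φ g1 * K - Φ g2 * K| < 1 →
      ∃ d : (Fin τ → Bool) → ℤ, d (fun _ => false) = 0 ∧ (∀ s, |d s| ≤ (N:ℤ)) ∧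
        0 < Int.fract (∑ s, (d s : ℝ) * rS τ s) ∧
        Int.fract (∑ s, (d s : ℝ) * rS τ s) ≤ ((N:ℝ) ^ (2 ^ τ - 1))⁻¹ := by
    intro g1 g2 hlt habs
    refine ⟨fun s => extg τ N g1 s - extg τ N g2 s, ?_, ?_, ?_, ?_⟩
    · beta_reduce
      rw [extg_zero, extg_zero, sub_zero]
    · intro s
      beta_reduce
      have h1 := extg_bd τ N g1 s
      have h2 := extg_bd τ N g2 s
      rw [abs_le]
      omega
    · beta_reduce
      rw [fract_sub_eq τ _ _ hlt]
      linarith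
    · beta_reduce
      rw [fract_sub_eq τ _ _ hlt]
      have hKpos : (0:ℝ) < (K:ℝ) := by exact_mod_cast hK1
      have h4 : (Φ g1 - Φ g2) * K < 1 := by
        have := le_abs_self (Φ g1 * K - Φ g2 * K)
        linarith
      have h5 : Φ g1 - Φ g2 < (K:ℝ)⁻¹ := by
        rw [← lt_div_iff₀ hKpos] at h4
        rwa [inv_eq_one_div]
      have h6 : ((K:ℝ))⁻¹ ≤ ((N:ℝ) ^ D)⁻¹ := by
        apply inv_anti₀ (by positivity)
        exact_mod_cast hNK
      rw [← hD_def]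
      linarith
  rcases lt_or_gt_of_ne hΦne with hlt | hlt
  · exact key g' g hlt (by rw [abs_sub_comm]; exact habs)
  · exact key g g' hlt habs

/-! ### Greedy algorithm -/

noncomputable def rr (θ : ℕ → ℝ) (α : ℝ) : ℕ → ℝ
  | 0 => α
  | (j+1) => rr θ α j - ⌊rr θ α j / θ j⌋ * θ j

lemma rr_nonneg (θ : ℕ → ℝ) (α : ℝ) (hθ : ∀ j, 0 < θ j) (hα : 0 ≤ α) :
    ∀ j, 0 ≤ rr θ α j := by
  intro j
  induction j with
  | zero => exact hα
  | succ j ih =>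
    rw [rr]
    have h1 : (⌊rr θ α j / θ j⌋ : ℝ) ≤ rr θ α j / θ j := Int.floor_le _
    have h2 : (⌊rr θ α j / θ j⌋ : ℝ) * θ j ≤ (rr θ α j / θ j) * θ j :=
      mul_le_mul_of_nonneg_right h1 (hθ j).le
    rw [div_mul_cancel₀ _ (hθ j).ne'] at h2
    linarith

lemma rr_succ_lt (θ : ℕ → ℝ) (α : ℝ) (hθ : ∀ j, 0 < θ j) (j : ℕ) :
    rr θ α (j+1) < θ j := by
  rw [rr]
  have h1 : rr θ α j / θ j < ⌊rr θ α j / θ j⌋ + 1 := Int.lt_floor_add_one _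
  have h2 : (rr θ α j / θ j) * θ j < ((⌊rr θ α j / θ j⌋ : ℝ) + 1) * θ j :=
    mul_lt_mul_of_pos_right h1 (hθ j)
  rw [div_mul_cancel₀ _ (hθ j).ne'] at h2
  linarith

lemma rr_m_nonneg (θ : ℕ → ℝ) (α : ℝ) (hθ : ∀ j, 0 < θ j) (hα : 0 ≤ α) (j : ℕ) :
    0 ≤ ⌊rr θ α j / θ j⌋ :=
  Int.floor_nonneg.mpr (div_nonneg (rr_nonneg θ α hθ hα j) (hθ j).le)

lemma rr_sum (θ : ℕ → ℝ) (α : ℝ) :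
    ∀ J, ∑ j ∈ Finset.range J, (⌊rr θ α j / θ j⌋ : ℝ) * θ j = α - rr θ α J := by
  intro J
  induction J with
  | zero => simp [rr]
  | succ J ih =>
    rw [Finset.sum_range_succ, ih]
    rw [show rr θ α (J+1) = rr θ α J - ⌊rr θ α J / θ J⌋ * θ J from rfl]
    ring

theorem stmt_14 (τ : ℕ) :
    ∃ C : ℝ, ∀ α : ℝ, 0 ≤ α → α < 1 → ∀ n : ℕ, 1 ≤ n →
      ∃ c : (Fin τ → Bool) → ℤ,
        c (fun _ => false) = 0 ∧ (∀ s, |c s| ≤ (n : ℤ)) ∧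
        0 ≤ α - Int.fract (∑ s, (c s : ℝ) * Real.sqrt (sqfDiv τ s)) ∧
        α - Int.fract (∑ s, (c s : ℝ) * Real.sqrt (sqfDiv τ s)) ≤
          C * (n : ℝ) ^ (-(2 ^ τ - 1 : ℤ)) := by
  have hrs : ∀ s : Fin τ → Bool, Real.sqrt (sqfDiv τ s) = rS τ s := fun s => rfl
  rcases Nat.eq_zero_or_pos τ with hτ0 | hτ
  · -- trivial case τ = 0
    subst hτ0
    refine ⟨1, fun α hα0 hα1 n hn => ⟨0, rfl, by simp, ?_, ?_⟩⟩
    · simp only [Pi.zero_apply, Int.cast_zero, zero_mul, Finset.sum_const_zero, Int.fract_zero,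
        sub_zero]
      exact hα0
    · simp only [Pi.zero_apply, Int.cast_zero, zero_mul, Finset.sum_const_zero, Int.fract_zero,
        sub_zero]
      have he : (-(2 ^ 0 - 1 : ℤ)) = 0 := by norm_num
      rw [he, zpow_zero]
      linarith
  -- main case
  have h2τ : 2 ≤ 2 ^ τ := by
    calc 2 = 2 ^ 1 := by norm_num
    _ ≤ 2 ^ τ := Nat.pow_le_pow_right (by norm_num) hτ
  have hMc := Mc_ge_one τ
  have hcast2 : ∀ j : ℕ, (((2:ℕ)^j : ℕ) : ℝ) = (2:ℝ)^j := fun j => by push_cast; ring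
  -- the family of small elements
  have hex := fun j : ℕ => pigeon τ (2^j) hτ (Nat.one_le_pow _ _ (by norm_num))
  choose dd hdd0 hddbd hddpos hddup using hex
  -- constants
  set Bc : ℝ := 2 ^ (2^τ-1) * (2 * Mc τ ^ 3) ^ (2^τ-1) with hBc_def
  have hBc_pos : 0 < Bc := by positivity
  set K : ℕ := ⌈Bc⌉₊ + 1 with hK_def
  have hK1 : 1 ≤ K := by omega
  have hBcK : Bc ≤ (K:ℝ) := by
    calc Bc ≤ (⌈Bc⌉₊ : ℝ) := Nat.le_ceil Bc
      _ ≤ (K : ℝ) := by exact_mod_cast Nat.le_succ _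
  refine ⟨((4 * K : ℕ) : ℝ) ^ (2^τ-1), fun α hα0 hα1 n hn => ?_⟩
  -- the fractional parts
  set θ : ℕ → ℝ := fun j => Int.fract (∑ s, (dd j s : ℝ) * rS τ s) with hθ_def
  have hθpos : ∀ j, 0 < θ j := hddpos
  have hθup : ∀ j, θ j ≤ (((2:ℝ)^j) ^ (2^τ-1))⁻¹ := fun j => by
    have h := hddup j
    rwa [hcast2 j] at h
  have hθlow : ∀ j, ((2 * Mc τ ^ 3 * (2:ℝ)^j) ^ (2^τ-1))⁻¹ ≤ θ j := by
    intro j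
    refine fract_lower τ (dd j) (hdd0 j) ((2:ℝ)^j) (one_le_pow₀ (by norm_num)) ?_ (hθpos j)
    intro s
    have h := hddbd j s
    rw [← hcast2 j]
    exact_mod_cast h
  -- the multipliers
  set m : ℕ → ℤ := fun j => ⌊rr θ α j / θ j⌋ with hm_def
  have hm0 : ∀ j, 0 ≤ m j := fun j => rr_m_nonneg θ α hθpos hα0 j
  have hUj : ∀ j, rr θ α j ≤ 2 ^ (2^τ-1) * (((2:ℝ)^j) ^ (2^τ-1))⁻¹ := by
    intro j
    cases j with
    | zero =>
      simp only [pow_zero, one_pow, inv_one, mul_one]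
      calc rr θ α 0 = α := rfl
        _ ≤ 1 := hα1.le
        _ ≤ 2 ^ (2^τ-1) := one_le_pow₀ (by norm_num)
    | succ j =>
      have h1 : rr θ α (j+1) < θ j := rr_succ_lt θ α hθpos j
      have h2 : θ j ≤ (((2:ℝ)^j) ^ (2^τ-1))⁻¹ := hθup j
      have h3 : 2 ^ (2^τ-1) * (((2:ℝ)^(j+1)) ^ (2^τ-1))⁻¹ = (((2:ℝ)^j) ^ (2^τ-1))⁻¹ := by
        rw [show (2:ℝ)^(j+1) = 2 * 2^j by ring, mul_pow, mul_inv, ← mul_assoc,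
          mul_inv_cancel₀ (by positivity), one_mul]
      rw [h3]
      linarith
  have hmBc : ∀ j, (m j : ℝ) ≤ Bc := by
    intro j
    have h1 : (m j : ℝ) ≤ rr θ α j / θ j := Int.floor_le _
    have h2 : (θ j)⁻¹ ≤ (2 * Mc τ ^ 3 * (2:ℝ)^j) ^ (2^τ-1) := by
      have := inv_anti₀ (by positivity) (hθlow j)
      rwa [inv_inv] at this
    have h3 : rr θ α j / θ j ≤ (2 ^ (2^τ-1) * (((2:ℝ)^j) ^ (2^τ-1))⁻¹)
        * ((2 * Mc τ ^ 3 * (2:ℝ)^j) ^ (2^τ-1)) := by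
      rw [div_eq_mul_inv]
      exact mul_le_mul (hUj j) h2 (inv_nonneg.mpr (hθpos j).le) (by positivity)
    have h4 : (2 ^ (2^τ-1) * (((2:ℝ)^j) ^ (2^τ-1))⁻¹)
        * ((2 * Mc τ ^ 3 * (2:ℝ)^j) ^ (2^τ-1)) = Bc := by
      rw [hBc_def, mul_pow (2 * Mc τ ^ 3)]
      field_simp
    rw [h4] at h3
    linarith
  have hmK : ∀ j, m j ≤ (K:ℤ) := by
    intro j
    have := (hmBc j).trans hBcK
    exact_mod_cast this
  -- choose the scale J
  by_cases hsmall : n < 2*K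
  · -- small n : use c = 0
    refine ⟨0, rfl, by simp, ?_, ?_⟩
    · simp only [Pi.zero_apply, Int.cast_zero, zero_mul, Finset.sum_const_zero, Int.fract_zero,
        sub_zero]
      exact hα0
    · simp only [Pi.zero_apply, Int.cast_zero, zero_mul, Finset.sum_const_zero, Int.fract_zero,
        sub_zero]
      have hzp : (n:ℝ) ^ (-(2 ^ τ - 1 : ℤ)) = (((n:ℝ)) ^ (2^τ-1 : ℕ))⁻¹ := by
        rw [show (-(2 ^ τ - 1 : ℤ)) = -((2^τ-1 : ℕ) : ℤ) by
          rw [Nat.cast_sub (Nat.one_le_two_pow)]; push_cast; ring]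
        rw [zpow_neg, zpow_natCast]
      rw [hzp]
      have hn4K : (n:ℝ) ≤ ((4*K:ℕ):ℝ) := by exact_mod_cast (by omega : n ≤ 4*K)
      have hnpos : (0:ℝ) < (n:ℝ) ^ (2^τ-1 : ℕ) := by positivity
      rw [← div_eq_mul_inv, le_div_iff₀ hnpos]
      calc α * (n:ℝ) ^ (2^τ-1 : ℕ) ≤ 1 * (n:ℝ) ^ (2^τ-1 : ℕ) := by nlinarith
        _ = (n:ℝ) ^ (2^τ-1 : ℕ) := by ring
        _ ≤ ((4*K:ℕ):ℝ) ^ (2^τ-1 : ℕ) := pow_le_pow_left₀ (by positivity) hn4K _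
  · -- large n
    push_neg at hsmall
    set x : ℕ := n / (2*K) with hx_def
    have hx1 : 1 ≤ x := (Nat.one_le_div_iff (by omega)).mpr hsmall
    set J : ℕ := Nat.log 2 x with hJ_def
    have h2J : 2^J ≤ x := Nat.pow_log_le_self 2 (by omega)
    have h2J' : x < 2^(J+1) := Nat.lt_pow_succ_log_self (by norm_num) x
    have hnlow : 2*K*2^J ≤ n := by
      calc 2*K*2^J ≤ 2*K*x := Nat.mul_le_mul_left _ h2J
        _ ≤ n := by rw [mul_comm]; exact Nat.div_mul_le_self n (2*K)
    have hnup : n < 4*K*2^J := by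
      have h1 := Nat.div_add_mod n (2*K)
      have h2 : n % (2*K) < 2*K := Nat.mod_lt _ (by omega)
      have h3 : x + 1 ≤ 2^(J+1) := h2J'
      calc n = 2*K*x + n % (2*K) := h1.symm
        _ < 2*K*x + 2*K := by exact Nat.add_lt_add_left h2 _
        _ = 2*K*(x+1) := by ring
        _ ≤ 2*K*(2^(J+1)) := Nat.mul_le_mul_left _ h3
        _ = 4*K*2^J := by rw [pow_succ]; ring
    -- fract of the produced value
    have hv : ∀ j : ℕ, ∑ s, (dd j s : ℝ) * rS τ s
        = (⌊∑ s, (dd j s : ℝ) * rS τ s⌋ : ℝ) + θ j :=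
      fun j => (Int.floor_add_fract _).symm
    have hT : ∑ j ∈ Finset.range (J+1), (m j:ℝ) * θ j = α - rr θ α (J+1) := by
      simp only [hm_def]
      exact rr_sum θ α (J+1)
    have hT0 : 0 ≤ ∑ j ∈ Finset.range (J+1), (m j:ℝ) * θ j :=
      Finset.sum_nonneg fun j _ => mul_nonneg (by exact_mod_cast hm0 j) (hθpos j).le
    have main_fract : Int.fract (∑ s, ((∑ j ∈ Finset.range (J+1), m j * dd j s : ℤ):ℝ) * rS τ s)
        = α - rr θ α (J+1) := by
      have hw : (∑ s, ((∑ j ∈ Finset.range (J+1), m j * dd j s : ℤ) : ℝ) * rS τ s)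
          = ∑ j ∈ Finset.range (J+1), (m j : ℝ) * (∑ s, (dd j s : ℝ) * rS τ s) := by
        calc (∑ s, ((∑ j ∈ Finset.range (J+1), m j * dd j s : ℤ) : ℝ) * rS τ s)
            = ∑ s, ∑ j ∈ Finset.range (J+1), ((m j:ℝ) * (dd j s:ℝ) * rS τ s) := by
              refine Finset.sum_congr rfl fun t _ => ?_
              have hc : ((∑ j ∈ Finset.range (J+1), m j * dd j t : ℤ):ℝ)
                  = ∑ j ∈ Finset.range (J+1), (m j:ℝ)*(dd j t:ℝ) := by push_cast; ring
              rw [hc, Finset.sum_mul]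
          _ = ∑ j ∈ Finset.range (J+1), ∑ s, ((m j:ℝ)*(dd j s:ℝ)* rS τ s) := Finset.sum_comm
          _ = ∑ j ∈ Finset.range (J+1), (m j : ℝ) * (∑ s, (dd j s : ℝ) * rS τ s) := by
              refine Finset.sum_congr rfl fun j _ => ?_
              rw [Finset.mul_sum]
              exact Finset.sum_congr rfl fun t _ => by ring
      rw [hw]
      have hsplit : ∑ j ∈ Finset.range (J+1), (m j:ℝ) * (∑ s, (dd j s : ℝ) * rS τ s)
          = ((∑ j ∈ Finset.range (J+1), m j * ⌊∑ s, (dd j s : ℝ) * rS τ s⌋ : ℤ):ℝ)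
            + ∑ j ∈ Finset.range (J+1), (m j:ℝ) * θ j := by
        push_cast
        rw [← Finset.sum_add_distrib]
        refine Finset.sum_congr rfl fun j _ => ?_
        linear_combination ((m j : ℝ)) * hv j
      rw [hsplit, Int.fract_intCast_add, hT]
      rw [Int.fract_eq_self.mpr ⟨by linarith [hT ▸ hT0], ?_⟩]
      have := rr_nonneg θ α hθpos hα0 (J+1)
      linarith
    -- the coefficient vector
    refine ⟨fun s => ∑ j ∈ Finset.range (J+1), m j * dd j s, ?_, ?_, ?_, ?_⟩
    · exact Finset.sum_eq_zero fun j _ => by rw [hdd0 j, mul_zero]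
    · intro s
      beta_reduce
      have hgeom : ∀ T:ℕ, ∑ j ∈ Finset.range T, (2:ℤ)^j = 2^T - 1 := by
        intro T; induction T with
        | zero => simp
        | succ T ih => rw [Finset.sum_range_succ, ih]; ring
      calc |∑ j ∈ Finset.range (J+1), m j * dd j s|
          ≤ ∑ j ∈ Finset.range (J+1), |m j * dd j s| := Finset.abs_sum_le_sum_abs _ _
        _ ≤ ∑ j ∈ Finset.range (J+1), (K:ℤ) * 2^j := by
            refine Finset.sum_le_sum fun j _ => ?_
            rw [abs_mul, abs_of_nonneg (hm0 j)]
            have h1 : |dd j s| ≤ ((2^j : ℕ):ℤ) := hddbd j s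
            have h2 : ((2^j:ℕ):ℤ) = (2:ℤ)^j := by push_cast; ring
            exact mul_le_mul (hmK j) (h2 ▸ h1) (abs_nonneg _) (by positivity)
        _ = (K:ℤ) * (2^(J+1) - 1) := by rw [← Finset.mul_sum, hgeom]
        _ ≤ (n:ℤ) := by
            have h1 : ((2*K*2^J:ℕ):ℤ) ≤ (n:ℤ) := by exact_mod_cast hnlow
            have h2 : ((2*K*2^J:ℕ):ℤ) = 2*(K:ℤ)*2^J := by push_cast; ring
            rw [h2] at h1
            have h3 : (0:ℤ) ≤ (K:ℤ) := by positivity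
            have h4 : ((2:ℤ))^(J+1) = 2 * 2^J := by rw [pow_succ]; ring
            rw [h4]
            nlinarith
    · -- value analysis
      beta_reduce
      simp only [hrs]
      rw [main_fract]
      have := rr_nonneg θ α hθpos hα0 (J+1)
      linarith
    · beta_reduce
      simp only [hrs]
      rw [main_fract]
      have hzp : (n:ℝ) ^ (-(2 ^ τ - 1 : ℤ)) = (((n:ℝ)) ^ (2^τ-1 : ℕ))⁻¹ := by
        rw [show (-(2 ^ τ - 1 : ℤ)) = -((2^τ-1 : ℕ) : ℤ) by
          rw [Nat.cast_sub Nat.one_le_two_pow]; push_cast; ring]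
        rw [zpow_neg, zpow_natCast]
      rw [hzp]
      have hnpos : (0:ℝ) < (n:ℝ) ^ (2^τ-1 : ℕ) := by positivity
      have h2Jpos : (0:ℝ) < ((2:ℝ)^J) ^ (2^τ-1 : ℕ) := by positivity
      have h1 : (n:ℝ) ≤ ((4*K*2^J:ℕ):ℝ) := by exact_mod_cast hnup.le
      have h2 : ((4*K*2^J:ℕ):ℝ) = ((4*K:ℕ):ℝ) * (2:ℝ)^J := by push_cast; ring
      have h3 : (n:ℝ)^(2^τ-1 : ℕ) ≤ ((4*K:ℕ):ℝ)^(2^τ-1) * ((2:ℝ)^J)^(2^τ-1) := by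
        rw [← mul_pow]
        exact pow_le_pow_left₀ (by positivity) (h2 ▸ h1) _
      have h4 : (((2:ℝ)^J) ^ (2^τ-1 : ℕ))⁻¹ ≤ ((4*K:ℕ):ℝ)^(2^τ-1) * ((n:ℝ)^(2^τ-1:ℕ))⁻¹ := by
        rw [inv_eq_one_div, ← div_eq_mul_inv, div_le_div_iff₀ h2Jpos hnpos, one_mul]
        nlinarith [h3, h2Jpos, hnpos]
      have h5 : rr θ α (J+1) < θ J := rr_succ_lt θ α hθpos J
      have h6 := hθup J
      linarith
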